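/- arXiv:2403.07668 — 3 statements merged into one kernel-verified Lean document; each statement's English description precedes it below -/
import Mathlib

section
/- Let a, b, c, α, β, γ, σ be real numbers with a ≠ 0, and suppose the dual numbers A = a + αε, B = b + βε, C = c + γε satisfy the shadow Markoff equation A² + B² + C² = (3 − σε)·A·B·C. Set a' = (b² + c²)/a and α' = (−a'α + 2bβ + 2cγ)/a, and A' = a' + α'ε. Then (A', B, C) also satisfies the shadow Markoff equation A'² + B² + C² = (3 − σε)·A'·B·C with the same constant σ. -/
open DualNumber TrivSqZeroExt

/-- Mutation preserves the shadow Markoff equation: if `(A, B, C)` satisfies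
`A² + B² + C² = (3 − σε)ABC` and `a ≠ 0`, then the mutated triple `(A', B, C)`
with `A' = a' + α'ε`, `a' = (b² + c²)/a`, `α' = (−a'α + 2bβ + 2cγ)/a`,
satisfies the same equation with the same constant `σ`. -/
theorem mutation_preserves_shadow_markoff (a b c α β γ σ : ℝ) (ha : a ≠ 0)
    (A B C : DualNumber ℝ)
    (hA : A = inl a + α • DualNumber.eps)
    (hB : B = inl b + β • DualNumber.eps)
    (hC : C = inl c + γ • DualNumber.eps)
    (hEq : A ^ 2 + B ^ 2 + C ^ 2 = (3 - σ • DualNumber.eps) * A * B * C)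
    (a' α' : ℝ) (A' : DualNumber ℝ)
    (ha' : a' = (b ^ 2 + c ^ 2) / a)
    (hα' : α' = (-a' * α + 2 * b * β + 2 * c * γ) / a)
    (hA' : A' = inl a' + α' • DualNumber.eps) :
    A' ^ 2 + B ^ 2 + C ^ 2 = (3 - σ • DualNumber.eps) * A' * B * C := by
  subst hA hB hC hA'
  rw [TrivSqZeroExt.ext_iff] at hEq ⊢
  obtain ⟨h1, h2⟩ := hEq
  have hf3 : TrivSqZeroExt.fst (3 : DualNumber ℝ) = 3 := rfl
  have hs3 : TrivSqZeroExt.snd (3 : DualNumber ℝ) = 0 := rfl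
  simp only [pow_two, fst_add, snd_add, fst_mul, DualNumber.snd_mul, fst_inl, snd_inl,
    fst_smul, snd_smul, fst_eps, snd_eps, fst_sub, snd_sub, smul_eq_mul, smul_zero,
    mul_zero, zero_mul, add_zero, zero_add, mul_one, sub_zero, zero_sub, hf3, hs3] at h1 h2 ⊢
  have hk : a' * a = b ^ 2 + c ^ 2 := by rw [ha']; field_simp
  have hα2 : α' * a = -a' * α + 2 * b * β + 2 * c * γ := by rw [hα']; field_simp
  have hsum : a + a' = 3 * b * c := by
    have h : a * (a + a') = a * (3 * b * c) := by linear_combination h1 + hk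
    exact mul_left_cancel₀ ha h
  constructor
  · linear_combination a' * hsum - hk
  · have h : a * (a' * α' + α' * a' + (b * β + β * b) + (c * γ + γ * c)) =
        a * (3 * a' * b * γ + (3 * a' * β + (3 * α' + -σ * a') * b) * c) := by
      linear_combination (2 * a' - 3 * b * c) * hα2 + a' * h2 +
        (-2 * a' * α + 2 * b * β + 2 * c * γ) * hsum
    exact mul_left_cancel₀ ha h
end

section
/- For every word w ∈ {L,R}*, the map ℚ³ → ℚ³ sending (α, β, γ) to the triple of shadow components (second entries) of T_w(α, β, γ) is a ℚ-linear map. -/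
/-- A direction in the Markoff tree: left or right. -/
inductive Dir : Type
  | L : Dir
  | R : Dir

/-- A triple of dual-number-like pairs `(real part, shadow part)` of rationals. -/
abbrev Triple : Type := (ℚ × ℚ) × (ℚ × ℚ) × (ℚ × ℚ)

/-- The left mutation `μ_L((a,α),(b,β),(c,γ)) = ((a,α),(c,γ),(b',β'))` with
`b' = (a²+c²)/b` and `β' = (−b'β + 2aα + 2cγ)/b`. -/
def muL : Triple → Triple
  | ((a, α), (b, β), (c, γ)) =>
    ((a, α), (c, γ),
      ((a ^ 2 + c ^ 2) / b,
        (-((a ^ 2 + c ^ 2) / b) * β + 2 * a * α + 2 * c * γ) / b))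

/-- The right mutation `μ_R((a,α),(b,β),(c,γ)) = ((c,γ),(b,β),(a',α'))` with
`a' = (b²+c²)/a` and `α' = (−a'α + 2bβ + 2cγ)/a`. -/
def muR : Triple → Triple
  | ((a, α), (b, β), (c, γ)) =>
    ((c, γ), (b, β),
      ((b ^ 2 + c ^ 2) / a,
        (-((b ^ 2 + c ^ 2) / a) * α + 2 * b * β + 2 * c * γ) / a))

/-- Apply the composition of mutations given by the word `w` to the root
`((1,α),(1,β),(1,γ))`. -/
def treeTriple (w : List Dir) (α β γ : ℚ) : Triple :=
  w.foldl (fun t d => match d with | Dir.L => muL t | Dir.R => muR t)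
    ((1, α), (1, β), (1, γ))


/-- A triple-valued function is "good" if its real parts are constant and its
shadow parts are given by linear maps. -/
def Good (f : ℚ × ℚ × ℚ → Triple) : Prop :=
  ∃ (a b c : ℚ) (p q r : (ℚ × ℚ × ℚ) →ₗ[ℚ] ℚ),
    ∀ v, f v = ((a, p v), (b, q v), (c, r v))

lemma good_muL {f : ℚ × ℚ × ℚ → Triple} (hf : Good f) : Good (fun v => muL (f v)) := by
  obtain ⟨a, b, c, p, q, r, h⟩ := hf
  refine ⟨a, c, (a ^ 2 + c ^ 2) / b, p, r,
    (-((a ^ 2 + c ^ 2) / b) / b) • q + (2 * a / b) • p + (2 * c / b) • r, fun v => ?_⟩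
  simp only [h, muL, LinearMap.add_apply, LinearMap.smul_apply, smul_eq_mul]
  refine Prod.ext rfl (Prod.ext rfl (Prod.ext rfl ?_))
  ring

lemma good_muR {f : ℚ × ℚ × ℚ → Triple} (hf : Good f) : Good (fun v => muR (f v)) := by
  obtain ⟨a, b, c, p, q, r, h⟩ := hf
  refine ⟨c, b, (b ^ 2 + c ^ 2) / a, r, q,
    (-((b ^ 2 + c ^ 2) / a) / a) • p + (2 * b / a) • q + (2 * c / a) • r, fun v => ?_⟩
  simp only [h, muR, LinearMap.add_apply, LinearMap.smul_apply, smul_eq_mul]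
  refine Prod.ext rfl (Prod.ext rfl (Prod.ext rfl ?_))
  ring

lemma good_foldl (w : List Dir) {f : ℚ × ℚ × ℚ → Triple} (hf : Good f) :
    Good (fun v => w.foldl (fun t d => match d with | Dir.L => muL t | Dir.R => muR t) (f v)) := by
  induction w generalizing f with
  | nil => exact hf
  | cons d w ih =>
    simp only [List.foldl_cons]
    cases d with
    | L => exact ih (good_muL hf)
    | R => exact ih (good_muR hf)

lemma good_tree (w : List Dir) : Good (fun v => treeTriple w v.1 v.2.1 v.2.2) := by
  have hroot : Good (fun v : ℚ × ℚ × ℚ => ((1, v.1), (1, v.2.1), (1, v.2.2)) : ℚ × ℚ × ℚ → Triple) :=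
    ⟨1, 1, 1, LinearMap.fst ℚ ℚ (ℚ × ℚ),
      (LinearMap.fst ℚ ℚ ℚ).comp (LinearMap.snd ℚ ℚ (ℚ × ℚ)),
      (LinearMap.snd ℚ ℚ ℚ).comp (LinearMap.snd ℚ ℚ (ℚ × ℚ)), fun v => rfl⟩
  exact good_foldl w hroot

/-- For every word `w`, the map sending `(α, β, γ)` to the triple of shadow
components of `T_w(α, β, γ)` is a `ℚ`-linear map. -/
theorem shadow_tree_isLinearMap (w : List Dir) :
    IsLinearMap ℚ (fun v : ℚ × ℚ × ℚ =>
      ((treeTriple w v.1 v.2.1 v.2.2).1.2,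
        (treeTriple w v.1 v.2.1 v.2.2).2.1.2,
        (treeTriple w v.1 v.2.1 v.2.2).2.2.2)) := by
  obtain ⟨a, b, c, p, q, r, h⟩ := good_tree w
  have h' : (fun v : ℚ × ℚ × ℚ =>
      ((treeTriple w v.1 v.2.1 v.2.2).1.2,
        (treeTriple w v.1 v.2.1 v.2.2).2.1.2,
        (treeTriple w v.1 v.2.1 v.2.2).2.2.2)) = fun v => (p v, q v, r v) := by
    funext v
    simp [h v]
  rw [h']
  exact ⟨fun x y => by simp [map_add, Prod.ext_iff], fun c x => by simp [map_smul, Prod.ext_iff]⟩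
end

section
/- Define Pell numbers by P₀ = 0, P₁ = 1, P_{n+2} = 2P_{n+1} + P_n. Define rational sequences (x_n), (y_n) by x₀ = 1, y₀ = 2, x₁ = 5, y₁ = 12, and for n ≥ 1: x_{n+1} = (4 + x_n²)/x_{n−1} and y_{n+1} = (−x_{n+1}·y_{n−1} + 8 + 2·x_n·y_n)/x_{n−1}. Then for all n, x_n = P_{2n+1} and y_n = P_{2n+2}; that is, along the branch of odd Pell Markoff numbers, the shadows arising from the initial shadow triple (1, 0, 2) are the even Pell numbers. -/
/-- The Pell numbers: `P₀ = 0`, `P₁ = 1`, `P_{n+2} = 2P_{n+1} + P_n`. -/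
def pell : ℕ → ℚ
  | 0 => 0
  | 1 => 1
  | n + 2 => 2 * pell (n + 1) + pell n

lemma pell_rec (n : ℕ) : pell (n + 2) = 2 * pell (n + 1) + pell n := rfl

lemma pell_nonneg_pos : ∀ n, 0 ≤ pell n ∧ 0 < pell (n + 1) := by
  intro n
  induction n with
  | zero => norm_num [pell]
  | succ k ih =>
    refine ⟨le_of_lt ih.2, ?_⟩
    rw [pell_rec]
    nlinarith [ih.1, ih.2]

lemma pell_pos (n : ℕ) : 0 < pell (n + 1) := (pell_nonneg_pos n).2

lemma pell_inv : ∀ n, (pell (2 * n + 1)) ^ 2 + 2 * pell (2 * n + 1) * pell (2 * n + 2)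
    - (pell (2 * n + 2)) ^ 2 = 1 := by
  intro n
  induction n with
  | zero => norm_num [pell]
  | succ k ih =>
    have h3 : pell (2 * (k + 1) + 1) = 2 * pell (2 * k + 2) + pell (2 * k + 1) := by
      have : 2 * (k + 1) + 1 = (2 * k + 1) + 2 := by ring
      rw [this, pell_rec]
    have h4 : pell (2 * (k + 1) + 2) = 2 * pell (2 * (k + 1) + 1) + pell (2 * k + 2) := by
      have : 2 * (k + 1) + 2 = (2 * k + 2) + 2 := by ring
      rw [this, pell_rec]
      norm_num
      ring_nf
    rw [h4, h3]
    nlinarith [ih]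

/-- Along the odd-Pell branch of the shadow Markoff tree with initial shadow
triple `(1, 0, 2)`, the real parts are the odd Pell numbers and the shadows
are the even Pell numbers. -/
theorem pell_branch_shadow (x y : ℕ → ℚ)
    (hx0 : x 0 = 1) (hy0 : y 0 = 2) (hx1 : x 1 = 5) (hy1 : y 1 = 12)
    (hx : ∀ n, x (n + 2) = (4 + x (n + 1) ^ 2) / x n)
    (hy : ∀ n, y (n + 2) =
      (-(x (n + 2)) * y n + 8 + 2 * x (n + 1) * y (n + 1)) / x n) :
    ∀ n, x n = pell (2 * n + 1) ∧ y n = pell (2 * n + 2) := by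
  have key : ∀ n, (x n = pell (2 * n + 1) ∧ y n = pell (2 * n + 2)) ∧
      (x (n + 1) = pell (2 * (n + 1) + 1) ∧ y (n + 1) = pell (2 * (n + 1) + 2)) := by
    intro n
    induction n with
    | zero =>
      refine ⟨⟨?_, ?_⟩, ?_, ?_⟩ <;> simp [hx0, hy0, hx1, hy1, pell] <;> norm_num
    | succ k ih =>
      obtain ⟨⟨hxa, hya⟩, hxb, hyb⟩ := ih
      set a := pell (2 * k + 1) with ha
      set b := pell (2 * k + 2) with hb
      have e3 : pell (2 * k + 3) = 2 * b + a := pell_rec _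
      have e4 : pell (2 * k + 4) = 2 * pell (2 * k + 3) + b := pell_rec _
      have e5 : pell (2 * k + 5) = 2 * pell (2 * k + 4) + pell (2 * k + 3) := pell_rec _
      have e6 : pell (2 * k + 6) = 2 * pell (2 * k + 5) + pell (2 * k + 4) := pell_rec _
      have hxb' : x (k + 1) = 2 * b + a := by rw [hxb]; show pell (2 * k + 3) = _; exact e3
      have hyb' : y (k + 1) = 5 * b + 2 * a := by
        rw [hyb]; show pell (2 * k + 4) = _; rw [e4, e3]; ring
      have hinv : a ^ 2 + 2 * a * b - b ^ 2 = 1 := pell_inv k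
      have hapos : 0 < a := pell_pos _
      have hane : a ≠ 0 := ne_of_gt hapos
      have hx2 : x (k + 2) = 12 * b + 5 * a := by
        rw [hx k, hxa, hxb']
        rw [div_eq_iff hane]
        nlinarith [hinv]
      have hy2 : y (k + 2) = 29 * b + 12 * a := by
        rw [hy k, hx2, hya, hyb', hxb', hxa]
        rw [div_eq_iff hane]
        nlinarith [hinv]
      refine ⟨⟨hxb, hyb⟩, ?_, ?_⟩
      · rw [hx2]; show _ = pell (2 * k + 5); rw [e5, e4, e3]; ring
      · rw [hy2]; show _ = pell (2 * k + 6); rw [e6, e5, e4, e3]; ring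
  exact fun n => (key n).1
end
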